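/- Let W, D be n×n real matrices with nonnegative entries and let α, β ≥ 0 satisfy α ≤ 1/(4‖W‖₁) and β ≤ 1/(4‖D‖₁). Then for all x, y ∈ S = {s ∈ ℝ^n : ‖s − 1‖_∞ ≤ 1}, the GRASP operator satisfies ‖G(x) − G(y)‖_∞ ≤ (3/4)·‖x − y‖_∞; in particular G is a contraction on S with factor at most 3/4. -/

import Mathlib

open Finset

/-- Maximum absolute column sum norm `‖A‖₁ = max_j ∑_i |A_{ij}|`. -/
noncomputable def matNorm1 {n : ℕ} (A : Matrix (Fin n) (Fin n) ℝ) : ℝ :=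
  ⨆ j, ∑ i, |A i j|

/-- The GRASP operator `G(s)_i = (1 + β (Dᵀ s)_i) / (1 + α (Wᵀ s)_i)`. -/
noncomputable def grasp {n : ℕ} (W D : Matrix (Fin n) (Fin n) ℝ) (α β : ℝ)
    (s : Fin n → ℝ) : Fin n → ℝ :=
  fun i => (1 + β * ∑ k, D k i * s k) / (1 + α * ∑ k, W k i * s k)

lemma sum_abs_le_matNorm1 {n : ℕ} (A : Matrix (Fin n) (Fin n) ℝ) (j : Fin n) :
    ∑ i, |A i j| ≤ matNorm1 A := by
  exact le_ciSup (Set.Finite.bddAbove (Set.finite_range fun j => ∑ i, |A i j|)) j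

lemma matNorm1_nonneg {n : ℕ} (A : Matrix (Fin n) (Fin n) ℝ) (j : Fin n) :
    0 ≤ matNorm1 A :=
  le_trans (Finset.sum_nonneg fun i _ => abs_nonneg _) (sum_abs_le_matNorm1 A j)

lemma mul_matNorm_le {M c : ℝ} (hM : 0 ≤ M) (hc : 0 ≤ c) (h : c ≤ 1 / (4 * M)) :
    c * M ≤ 1 / 4 := by
  rcases eq_or_lt_of_le hM with h0 | h0
  · rw [← h0]; norm_num
  · have := mul_le_mul_of_nonneg_right h (le_of_lt h0)
    rw [div_mul_eq_mul_div, one_mul] at this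
    calc c * M ≤ M / (4 * M) := this
      _ = 1 / 4 := by field_simp

/-- Contraction: for nonnegative `W, D` and `α ≤ 1/(4‖W‖₁)`, `β ≤ 1/(4‖D‖₁)`, the GRASP
operator is a contraction with factor `3/4` on `S = {s : ‖s - 1‖_∞ ≤ 1}`. -/
theorem grasp_contraction {n : ℕ} (W D : Matrix (Fin n) (Fin n) ℝ)
    (hW : ∀ i j, 0 ≤ W i j) (hD : ∀ i j, 0 ≤ D i j)
    (α β : ℝ) (hα : 0 ≤ α) (hβ : 0 ≤ β)
    (hα' : α ≤ 1 / (4 * matNorm1 W)) (hβ' : β ≤ 1 / (4 * matNorm1 D))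
    (x y : Fin n → ℝ) (hx : ‖x - 1‖ ≤ 1) (hy : ‖y - 1‖ ≤ 1) :
    ‖grasp W D α β x - grasp W D α β y‖ ≤ (3 / 4) * ‖x - y‖ := by
  rw [pi_norm_le_iff_of_nonneg (by positivity)]
  intro i
  -- bounds on coordinates of x and y
  have hrange : ∀ s : Fin n → ℝ, ‖s - 1‖ ≤ 1 → ∀ k, 0 ≤ s k ∧ s k ≤ 2 := by
    intro s hs k
    have h1 : |s k - 1| ≤ 1 := by
      have := norm_le_pi_norm (s - 1) k
      simp only [Pi.sub_apply, Pi.one_apply, Real.norm_eq_abs] at this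
      linarith
    have := abs_le.1 h1
    constructor <;> linarith [this.1, this.2]
  have hx2 := hrange x hx
  have hy2 := hrange y hy
  have hxy : ∀ k, |x k - y k| ≤ ‖x - y‖ := by
    intro k
    have := norm_le_pi_norm (x - y) k
    simpa [Real.norm_eq_abs] using this
  -- sums with nonnegative matrices
  have hsum_nonneg : ∀ (A : Matrix (Fin n) (Fin n) ℝ), (∀ a b, 0 ≤ A a b) →
      ∀ s : Fin n → ℝ, (∀ k, 0 ≤ s k ∧ s k ≤ 2) → 0 ≤ ∑ k, A k i * s k := by
    intro A hA s hs
    exact Finset.sum_nonneg fun k _ => mul_nonneg (hA k i) (hs k).1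
  have hsum_le : ∀ (A : Matrix (Fin n) (Fin n) ℝ), (∀ a b, 0 ≤ A a b) →
      ∀ s : Fin n → ℝ, (∀ k, 0 ≤ s k ∧ s k ≤ 2) →
      ∑ k, A k i * s k ≤ 2 * matNorm1 A := by
    intro A hA s hs
    calc ∑ k, A k i * s k ≤ ∑ k, A k i * 2 :=
          Finset.sum_le_sum fun k _ => mul_le_mul_of_nonneg_left (hs k).2 (hA k i)
      _ = 2 * ∑ k, |A k i| := by
          rw [Finset.mul_sum]
          exact Finset.sum_congr rfl fun k _ => by rw [abs_of_nonneg (hA k i)]; ring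
      _ ≤ 2 * matNorm1 A := by linarith [sum_abs_le_matNorm1 A i]
  have hdiff : ∀ (A : Matrix (Fin n) (Fin n) ℝ), (∀ a b, 0 ≤ A a b) →
      |∑ k, A k i * x k - ∑ k, A k i * y k| ≤ matNorm1 A * ‖x - y‖ := by
    intro A hA
    rw [← Finset.sum_sub_distrib]
    calc |∑ k, (A k i * x k - A k i * y k)| ≤ ∑ k, |A k i * x k - A k i * y k| :=
          Finset.abs_sum_le_sum_abs _ _
      _ ≤ ∑ k, |A k i| * ‖x - y‖ := by
          apply Finset.sum_le_sum
          intro k _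
          rw [← mul_sub, abs_mul]
          exact mul_le_mul_of_nonneg_left (hxy k) (abs_nonneg _)
      _ = (∑ k, |A k i|) * ‖x - y‖ := by rw [← Finset.sum_mul]
      _ ≤ matNorm1 A * ‖x - y‖ :=
          mul_le_mul_of_nonneg_right (sum_abs_le_matNorm1 A i) (norm_nonneg _)
  have hαW : α * matNorm1 W ≤ 1 / 4 := mul_matNorm_le (matNorm1_nonneg W i) hα hα'
  have hβD : β * matNorm1 D ≤ 1 / 4 := mul_matNorm_le (matNorm1_nonneg D i) hβ hβ'
  set Nx := 1 + β * ∑ k, D k i * x k with hNxdef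
  set Ny := 1 + β * ∑ k, D k i * y k with hNydef
  set Px := 1 + α * ∑ k, W k i * x k with hPxdef
  set Py := 1 + α * ∑ k, W k i * y k with hPydef
  have hPx1 : 1 ≤ Px := by
    have := hsum_nonneg W hW x hx2
    nlinarith
  have hPy1 : 1 ≤ Py := by
    have := hsum_nonneg W hW y hy2
    nlinarith
  have hNy1 : 1 ≤ Ny := by
    have := hsum_nonneg D hD y hy2
    nlinarith
  have hNy2 : Ny ≤ 3 / 2 := by
    have h1 := hsum_le D hD y hy2
    have h2 := hsum_nonneg D hD y hy2
    nlinarith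
  have hPy2 : Py ≤ 3 / 2 := by
    have h1 := hsum_le W hW y hy2
    have h2 := hsum_nonneg W hW y hy2
    nlinarith
  have hNdiff : |Nx - Ny| ≤ (1 / 4) * ‖x - y‖ := by
    have h1 := hdiff D hD
    have h2 : |Nx - Ny| = β * |∑ k, D k i * x k - ∑ k, D k i * y k| := by
      rw [hNxdef, hNydef]
      rw [show (1 + β * ∑ k, D k i * x k) - (1 + β * ∑ k, D k i * y k)
            = β * ((∑ k, D k i * x k) - ∑ k, D k i * y k) by ring]
      rw [abs_mul, abs_of_nonneg hβ]
    rw [h2]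
    calc β * |∑ k, D k i * x k - ∑ k, D k i * y k| ≤ β * (matNorm1 D * ‖x - y‖) :=
          mul_le_mul_of_nonneg_left h1 hβ
      _ = (β * matNorm1 D) * ‖x - y‖ := by ring
      _ ≤ (1 / 4) * ‖x - y‖ := mul_le_mul_of_nonneg_right hβD (norm_nonneg _)
  have hPdiff : |Px - Py| ≤ (1 / 4) * ‖x - y‖ := by
    have h1 := hdiff W hW
    have h2 : |Px - Py| = α * |∑ k, W k i * x k - ∑ k, W k i * y k| := by
      rw [hPxdef, hPydef]
      rw [show (1 + α * ∑ k, W k i * x k) - (1 + α * ∑ k, W k i * y k)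
            = α * ((∑ k, W k i * x k) - ∑ k, W k i * y k) by ring]
      rw [abs_mul, abs_of_nonneg hα]
    rw [h2]
    calc α * |∑ k, W k i * x k - ∑ k, W k i * y k| ≤ α * (matNorm1 W * ‖x - y‖) :=
          mul_le_mul_of_nonneg_left h1 hα
      _ = (α * matNorm1 W) * ‖x - y‖ := by ring
      _ ≤ (1 / 4) * ‖x - y‖ := mul_le_mul_of_nonneg_right hαW (norm_nonneg _)
  have hPx0 : (0:ℝ) < Px := by linarith
  have hPy0 : (0:ℝ) < Py := by linarith
  have hG : (grasp W D α β x - grasp W D α β y) i = Nx / Px - Ny / Py := by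
    simp [grasp]; rfl
  rw [hG, Real.norm_eq_abs, div_sub_div _ _ (ne_of_gt hPx0) (ne_of_gt hPy0),
    abs_div, abs_of_pos (mul_pos hPx0 hPy0)]
  have hden : (1:ℝ) ≤ Px * Py := by nlinarith
  have hnum : |Nx * Py - Px * Ny| ≤ (3 / 4) * ‖x - y‖ := by
    have heq : Nx * Py - Px * Ny = (Nx - Ny) * Py - Ny * (Px - Py) := by ring
    rw [heq]
    calc |(Nx - Ny) * Py - Ny * (Px - Py)|
        ≤ |(Nx - Ny) * Py| + |Ny * (Px - Py)| := abs_sub _ _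
      _ = |Nx - Ny| * Py + Ny * |Px - Py| := by
          rw [abs_mul, abs_mul, abs_of_pos hPy0, abs_of_pos (by linarith : (0:ℝ) < Ny)]
      _ ≤ ((1 / 4) * ‖x - y‖) * (3 / 2) + (3 / 2) * ((1 / 4) * ‖x - y‖) := by
          have h1 : |Nx - Ny| * Py ≤ ((1 / 4) * ‖x - y‖) * (3 / 2) := by
            apply mul_le_mul hNdiff hPy2 (by linarith) (by positivity)
          have h2 : Ny * |Px - Py| ≤ (3 / 2) * ((1 / 4) * ‖x - y‖) := by
            apply mul_le_mul hNy2 hPdiff (abs_nonneg _) (by norm_num)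
          linarith
      _ = (3 / 4) * ‖x - y‖ := by ring
  calc |Nx * Py - Px * Ny| / (Px * Py) ≤ |Nx * Py - Px * Ny| :=
        div_le_self (abs_nonneg _) hden
    _ ≤ (3 / 4) * ‖x - y‖ := hnum
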